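/- Let l, m be nonnegative integers with m ≥ 1, let k be a positive integer, let N be a real s × s matrix with N^k = 0, let u : ℝ → ℝ^s be infinitely differentiable, and define the exact solution z(t) = Σ_{j=0}^{k−1} (−1)^j · N^j · u^{(j)}(t). Fix t_{n−1} ∈ ℝ. For each h > 0, suppose vectors ẑ^{(0)}(h), …, ẑ^{(m)}(h) ∈ ℝ^s satisfy the discretized relations N · ẑ^{(i+1)}(h) = −ẑ^{(i)}(h) + u^{(i)}(t_{n−1} + h) for i = 0, …, m−1, together with the Obreshkov closure Σ_{i=0}^{m} (−1)^i · α_{i,l,m} · h^i · ẑ^{(i)}(h) = Σ_{i=0}^{l} α_{i,m,l} · h^i · z^{(i)}(t_{n−1}). Then for each i with 0 ≤ i ≤ m: if m − i ≥ k, then ẑ^{(i)}(h) = z^{(i)}(t_{n−1} + h) for every h > 0; and if m − i < k, then h^i · (ẑ^{(i)}(h) − z^{(i)}(t_{n−1} + h)) = O(h^{l+m+2−k}) as h → 0⁺. -/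

import Mathlib

/-- The Obreshkov coefficient `α_{i,l,m} = ((m+l−i)! / (m+l)!) · binom(m, i)`. -/
noncomputable def obreshkovAlpha (i l m : ℕ) : ℝ :=
  (Nat.factorial (m + l - i) : ℝ) / (Nat.factorial (m + l)) * (Nat.choose m i)

open Finset Filter Asymptotics Set

section helpers
variable {E : Type*} [NormedAddCommGroup E] [NormedSpace ℝ E]
variable {F : Type*} [NormedAddCommGroup F] [NormedSpace ℝ F]


lemma sum_alt_choose : ∀ (m n r : ℕ), m ≤ n →
    ∑ i ∈ Finset.range (m+1), (-1:ℝ)^i * (m.choose i) * ((n-i).choose r)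
      = if m ≤ r then (((n-m).choose (r-m) : ℕ) : ℝ) else 0 := by
  intro m
  induction m with
  | zero => intro n r _; simp
  | succ m ih =>
    intro n r hmn
    have hmn1 : m ≤ n := by omega
    have hmn2 : m ≤ n - 1 := by omega
    have step1 : ∑ i ∈ Finset.range (m+1+1), (-1:ℝ)^i * ((m+1).choose i) * ((n-i).choose r)
        = (∑ i ∈ Finset.range (m+1), (-1:ℝ)^(i+1) * ((m+1).choose (i+1)) * ((n-(i+1)).choose r))
          + ((n.choose r : ℕ) : ℝ) := by
      rw [Finset.sum_range_succ' (fun i => (-1:ℝ)^i * ((m+1).choose i) * ((n-i).choose r)) (m+1)]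
      simp
    have step2 : (∑ i ∈ Finset.range (m+1), (-1:ℝ)^(i+1) * ((m+1).choose (i+1)) * ((n-(i+1)).choose r))
        = (∑ i ∈ Finset.range (m+1), (-((-1:ℝ)^i * (m.choose i) * (((n-1)-i).choose r))
            + (-1:ℝ)^(i+1) * (m.choose (i+1)) * ((n-(i+1)).choose r))) := by
      refine Finset.sum_congr rfl fun i _ => ?_
      have e1 : n - (i+1) = (n-1) - i := by omega
      rw [e1, Nat.choose_succ_succ]
      push_cast
      ring
    have step3 : (∑ i ∈ Finset.range (m+1), (-1:ℝ)^(i+1) * (m.choose (i+1)) * ((n-(i+1)).choose r))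
          + ((n.choose r : ℕ) : ℝ)
        = ∑ i ∈ Finset.range (m+1), (-1:ℝ)^i * (m.choose i) * ((n-i).choose r) := by
      have := Finset.sum_range_succ' (fun i => (-1:ℝ)^i * (m.choose i) * ((n-i).choose r)) (m+1)
      rw [Finset.sum_range_succ (fun i => (-1:ℝ)^i * (m.choose i) * ((n-i).choose r)) (m+1)] at this
      simp only [Nat.choose_succ_self, Nat.cast_zero, mul_zero, zero_mul, add_zero] at this
      simpa using this.symm
    rw [step1, step2, Finset.sum_add_distrib, Finset.sum_neg_distrib]
    rw [add_assoc, step3, ih n r hmn1, ih (n-1) r hmn2]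
    by_cases h1 : m + 1 ≤ r
    · have h2 : m ≤ r := by omega
      rw [if_pos h2, if_pos h2, if_pos h1]
      have ha : n - m = (n - (m+1)) + 1 := by omega
      have hb : r - m = (r - (m+1)) + 1 := by omega
      have hc : (n-1) - m = n - (m+1) := by omega
      rw [ha, hb, hc, Nat.choose_succ_succ]
      push_cast
      ring
    · by_cases h2 : m ≤ r
      · have hr : r = m := by omega
        simp only [h2, if_pos, if_neg h1, hr]
        have hc : (n-1) - m = n - (m+1) := by omega
        simp [hc, Nat.sub_self]
      · simp [if_neg h1, if_neg h2]
        intro h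
        exact absurd h (by omega)

lemma coeff_identity (l m p : ℕ) (hp : p ≤ l + m) :
    ∑ i ∈ Finset.range (m+1),
      (if i ≤ p then (-1:ℝ)^i * obreshkovAlpha i l m / (Nat.factorial (p - i)) else 0)
      = obreshkovAlpha p m l := by
  have key : ∀ i ∈ Finset.range (m+1),
      (if i ≤ p then (-1:ℝ)^i * obreshkovAlpha i l m / (Nat.factorial (p - i)) else 0)
      = ((Nat.factorial (m + l - p) : ℝ) / (Nat.factorial (m + l))) *
          ((-1:ℝ)^i * (m.choose i) * (((m+l)-i).choose ((m+l)-p))) := by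
    intro i hi
    rw [Finset.mem_range] at hi
    by_cases hip : i ≤ p
    · rw [if_pos hip]
      have hfac : (Nat.factorial (m + l - i) : ℝ)
          = ((m+l-i).choose (m+l-p) : ℝ) * (Nat.factorial (m+l-p)) * (Nat.factorial (p - i)) := by
        have h1 : (m+l-p) ≤ (m+l-i) := by omega
        have h2 : (m+l-i) - (m+l-p) = p - i := by omega
        have := Nat.choose_mul_factorial_mul_factorial h1
        rw [h2] at this
        exact_mod_cast this.symm
      rw [obreshkovAlpha, hfac]
      have hpf : (Nat.factorial (p - i) : ℝ) ≠ 0 := Nat.cast_ne_zero.mpr (Nat.factorial_ne_zero _)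
      have hmlf : (Nat.factorial (m + l) : ℝ) ≠ 0 := Nat.cast_ne_zero.mpr (Nat.factorial_ne_zero _)
      field_simp
    · rw [if_neg hip]
      have : ((m+l)-i).choose ((m+l)-p) = 0 := by
        apply Nat.choose_eq_zero_of_lt
        omega
      rw [this]
      simp
  rw [Finset.sum_congr rfl key, ← Finset.mul_sum, sum_alt_choose m (m+l) (m+l-p) (by omega)]
  by_cases hpl : p ≤ l
  · have hcond : m ≤ m + l - p := by omega
    rw [if_pos hcond]
    have e1 : (m + l) - m = l := by omega
    have e2 : (m + l - p) - m = l - p := by omega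
    rw [e1, e2, Nat.choose_symm hpl, obreshkovAlpha]
    rw [show l + m - p = m + l - p by omega, show l + m = m + l by omega]
  · have hcond : ¬ (m ≤ m + l - p) := by omega
    rw [if_neg hcond, obreshkovAlpha]
    have : l.choose p = 0 := Nat.choose_eq_zero_of_lt (by omega)
    rw [this]
    simp



lemma myIteratedDerivWithin_eq {f : ℝ → E} (hf : ContDiff ℝ (⊤:ℕ∞) f) {s : Set ℝ}
    (hs : UniqueDiffOn ℝ s) {x : ℝ} (hx : x ∈ s) (n : ℕ) :
    iteratedDerivWithin n f s x = iteratedDeriv n f x := by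
  rw [iteratedDerivWithin_eq_iteratedFDerivWithin, iteratedDeriv_eq_iteratedFDeriv]
  congr 1
  have hf' : ContDiff ℝ (n : ℕ∞) f := hf.of_le (by exact_mod_cast le_top)
  have := ((contDiff_iff_ftaylorSeries.mp hf').hasFTaylorSeriesUpToOn s
    ).eq_iteratedFDerivWithin_of_uniqueDiffOn (m := n) (by exact_mod_cast le_rfl) hs hx
  exact this.symm

lemma taylor_isBigO {f : ℝ → E} (hf : ContDiff ℝ (⊤:ℕ∞) f) (t : ℝ) (n : ℕ) :
    (fun h : ℝ => f (t+h) - ∑ q ∈ Finset.range (n+1),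
        ((h^q / (Nat.factorial q : ℝ)) • iteratedDeriv q f t))
      =O[nhdsWithin (0:ℝ) (Set.Ioi 0)] fun h => h^(n+1) := by
  have hab : (t : ℝ) ≤ t + 1 := by linarith
  have hcd : ContDiffOn ℝ (n+1 : ℕ) f (Set.Icc t (t+1)) :=
    hf.contDiffOn.of_le (by exact_mod_cast le_top)
  obtain ⟨C, hC⟩ := exists_taylor_mean_remainder_bound hab hcd
  rw [isBigO_iff]
  refine ⟨|C|, ?_⟩
  filter_upwards [Ioc_mem_nhdsGT_of_mem (by constructor <;> norm_num : (0:ℝ) ∈ Set.Ico (0:ℝ) 1)]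
    with h hh
  have hx : t + h ∈ Set.Icc t (t+1) := ⟨by linarith [hh.1], by linarith [hh.2]⟩
  have := hC (t+h) hx
  have htay : taylorWithinEval f n (Set.Icc t (t+1)) t (t+h)
      = ∑ q ∈ Finset.range (n+1), ((h^q / (Nat.factorial q : ℝ)) • iteratedDeriv q f t) := by
    rw [taylor_within_apply]
    refine Finset.sum_congr rfl fun q _ => ?_
    rw [myIteratedDerivWithin_eq hf (uniqueDiffOn_Icc (by linarith)) (Set.left_mem_Icc.mpr hab) q]
    congr 1
    rw [add_sub_cancel_left]
    rw [div_eq_inv_mul]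
  rw [htay] at this
  calc ‖f (t+h) - ∑ q ∈ Finset.range (n+1),
        ((h^q / (Nat.factorial q : ℝ)) • iteratedDeriv q f t)‖
      ≤ C * (t + h - t)^(n+1) := this
    _ ≤ |C| * ‖h^(n+1)‖ := by
        rw [add_sub_cancel_left]
        have : (h:ℝ)^(n+1) ≤ |h^(n+1)| := le_abs_self _
        have hnn : (0:ℝ) ≤ h^(n+1) := pow_nonneg hh.1.le _
        calc C * h^(n+1) ≤ |C| * h^(n+1) := by
              apply mul_le_mul_of_nonneg_right (le_abs_self C) hnn
          _ = |C| * ‖h^(n+1)‖ := by rw [Real.norm_eq_abs, abs_of_nonneg hnn]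

lemma myIteratedDeriv_clm (g : E →L[ℝ] F) {f : ℝ → E} (hf : ContDiff ℝ (⊤:ℕ∞) f) (n : ℕ)
    (x : ℝ) : iteratedDeriv n (fun t => g (f t)) x = g (iteratedDeriv n f x) := by
  have h1 := g.iteratedFDeriv_comp_left (f := f) hf.contDiffAt (x := x) (i := n) (by exact_mod_cast le_top)
  rw [iteratedDeriv_eq_iteratedFDeriv, iteratedDeriv_eq_iteratedFDeriv]
  show (iteratedFDeriv ℝ n (g ∘ f) x) (fun _ => 1) = _
  rw [h1]
  rfl

lemma myContDiff_iteratedDeriv {u : ℝ → E} (hu : ContDiff ℝ (⊤:ℕ∞) u) (j : ℕ) :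
    ContDiff ℝ (⊤:ℕ∞) (iteratedDeriv j u) := by
  rw [iteratedDeriv_eq_iterate]
  exact ContDiff.iterate_deriv j hu

lemma myIteratedDeriv_comp (a b : ℕ) (f : ℝ → E) :
    iteratedDeriv a (iteratedDeriv b f) = iteratedDeriv (a + b) f := by
  induction a with
  | zero => simp
  | succ a ih => rw [iteratedDeriv_succ, ih, ← iteratedDeriv_succ, Nat.succ_add]

lemma myIteratedDeriv_add {f g : ℝ → E} (hf : ContDiff ℝ (⊤:ℕ∞) f) (hg : ContDiff ℝ (⊤:ℕ∞) g)
    (n : ℕ) (x : ℝ) :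
    iteratedDeriv n (fun t => f t + g t) x = iteratedDeriv n f x + iteratedDeriv n g x := by
  simp only [← iteratedDerivWithin_univ]
  exact iteratedDerivWithin_add (Set.mem_univ x) uniqueDiffOn_univ
    ((hf.of_le (by exact_mod_cast le_top)).contDiffWithinAt)
    ((hg.of_le (by exact_mod_cast le_top)).contDiffWithinAt)

lemma myIteratedDeriv_zero_fun (n : ℕ) : iteratedDeriv n (fun _ : ℝ => (0:E)) = fun _ => 0 := by
  induction n with
  | zero => simp
  | succ n ih => rw [iteratedDeriv_succ, ih]; funext x; simp

lemma myIteratedDeriv_sum {ι : Type*} [DecidableEq ι] (s : Finset ι) (f : ι → ℝ → E)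
    (hf : ∀ i ∈ s, ContDiff ℝ (⊤:ℕ∞) (f i)) (n : ℕ) (x : ℝ) :
    iteratedDeriv n (fun t => ∑ i ∈ s, f i t) x = ∑ i ∈ s, iteratedDeriv n (f i) x := by
  induction s using Finset.induction with
  | empty => simp only [Finset.sum_empty]; rw [myIteratedDeriv_zero_fun]
  | @insert a s ha ih =>
    rw [Finset.sum_insert ha]
    have h1 : ∀ x, (∑ i ∈ insert a s, f i x) = f a x + ∑ i ∈ s, f i x := by
      intro x; rw [Finset.sum_insert ha]
    simp only [h1]
    rw [myIteratedDeriv_add (hf a (Finset.mem_insert_self a s))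
      (ContDiff.sum fun i hi => hf i (Finset.mem_insert_of_mem hi)) n x,
      ih fun i hi => hf i (Finset.mem_insert_of_mem hi)]



lemma my_zpow_isBigO {a b : ℤ} (hba : b ≤ a) :
    (fun h : ℝ => h ^ a) =O[nhdsWithin (0:ℝ) (Set.Ioi 0)] fun h => h ^ b := by
  rw [isBigO_iff]
  refine ⟨1, ?_⟩
  filter_upwards [Ioc_mem_nhdsGT_of_mem (by constructor <;> norm_num : (0:ℝ) ∈ Set.Ico (0:ℝ) 1)]
    with h hh
  have h0 : (0:ℝ) < h := hh.1
  rw [Real.norm_eq_abs, Real.norm_eq_abs, abs_of_nonneg (zpow_nonneg h0.le _),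
    abs_of_nonneg (zpow_nonneg h0.le _), one_mul]
  exact zpow_le_zpow_right_of_le_one₀ h0 hh.2 hba

lemma my_smul_pow_isBigO (a : ℕ) {c : ℤ} {F : ℝ → E}
    (hF : F =O[nhdsWithin (0:ℝ) (Set.Ioi 0)] fun h => h ^ c) :
    (fun h : ℝ => (h ^ a) • F h) =O[nhdsWithin (0:ℝ) (Set.Ioi 0)] fun h => h ^ ((a:ℤ) + c) := by
  have h1 : (fun h : ℝ => (h ^ a) • F h) =O[nhdsWithin (0:ℝ) (Set.Ioi 0)]
      fun h => (h ^ a) • (h ^ c) := (isBigO_refl (fun h : ℝ => h ^ a) _).smul hF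
  refine h1.trans (Filter.EventuallyEq.isBigO ?_)
  filter_upwards [self_mem_nhdsWithin] with h hh
  have h0 : (h:ℝ) ≠ 0 := ne_of_gt hh
  rw [smul_eq_mul, ← zpow_natCast h a, ← zpow_add₀ h0]

lemma my_unsmul_pow_isBigO (a : ℕ) {c : ℤ} {F : ℝ → E}
    (hF : (fun h : ℝ => (h ^ a) • F h) =O[nhdsWithin (0:ℝ) (Set.Ioi 0)] fun h => h ^ c) :
    F =O[nhdsWithin (0:ℝ) (Set.Ioi 0)] fun h => h ^ (c - (a:ℤ)) := by
  rw [isBigO_iff] at hF ⊢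
  obtain ⟨C, hC⟩ := hF
  refine ⟨C, ?_⟩
  filter_upwards [hC, self_mem_nhdsWithin] with h hCh hh
  have h0 : (0:ℝ) < h := hh
  have hpow : (0:ℝ) < h ^ a := pow_pos h0 a
  rw [norm_smul, Real.norm_eq_abs, abs_of_nonneg hpow.le] at hCh
  have : ‖F h‖ ≤ C * ‖h ^ c‖ / h ^ a := by
    rw [le_div_iff₀ hpow]
    calc ‖F h‖ * h ^ a = h ^ a * ‖F h‖ := by ring
      _ ≤ C * ‖h ^ c‖ := hCh
  refine this.trans (le_of_eq ?_)
  rw [Real.norm_eq_abs, Real.norm_eq_abs, abs_of_nonneg (zpow_nonneg h0.le _),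
    abs_of_nonneg (zpow_nonneg h0.le _), zpow_sub₀ (ne_of_gt h0), zpow_natCast, mul_div_assoc]

end helpers

/-- Error of the Obreshkov method in the purely algebraic subsystem of a DAE of
index `k`: the approximations `ẑ^{(i)}(h)` produced by the discretized
relations and the Obreshkov closure are exact when `m − i ≥ k`, and satisfy
`hⁱ (ẑ^{(i)}(h) − z^{(i)}(t_{n−1}+h)) = O(h^{l+m+2−k})` as `h → 0⁺` when
`m − i < k`. -/
theorem obreshkov_algebraic_error_component (l m : ℕ) (hm : 1 ≤ m) {s : ℕ}
    (k : ℕ) (hk : 0 < k)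
    (N : Matrix (Fin s) (Fin s) ℝ) (hN : N ^ k = 0)
    (u : ℝ → Fin s → ℝ) (hu : ContDiff ℝ (⊤ : ℕ∞) u)
    (z : ℝ → Fin s → ℝ)
    (hz : ∀ t : ℝ,
      z t = ∑ j ∈ Finset.range k,
        ((-1 : ℝ) ^ j) • (N ^ j).mulVec (iteratedDeriv j u t))
    (tn : ℝ)
    (zhat : ℕ → ℝ → Fin s → ℝ)
    (hchain : ∀ h : ℝ, 0 < h → ∀ i < m,
      N.mulVec (zhat (i + 1) h) = -zhat i h + iteratedDeriv i u (tn + h))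
    (hclosure : ∀ h : ℝ, 0 < h →
      ∑ i ∈ Finset.range (m + 1),
        ((-1 : ℝ) ^ i * obreshkovAlpha i l m * h ^ i) • zhat i h =
      ∑ i ∈ Finset.range (l + 1),
        (obreshkovAlpha i m l * h ^ i) • iteratedDeriv i z tn) :
    ∀ i ≤ m,
      (k ≤ m - i → ∀ h : ℝ, 0 < h → zhat i h = iteratedDeriv i z (tn + h)) ∧
      (m - i < k →
        Asymptotics.IsBigO (nhdsWithin (0 : ℝ) (Set.Ioi 0))
          (fun h : ℝ => (h ^ i) • (zhat i h - iteratedDeriv i z (tn + h)))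
          (fun h : ℝ => h ^ ((l : ℤ) + (m : ℤ) + 2 - (k : ℤ)))) := by
  classical
  set MV : Matrix (Fin s) (Fin s) ℝ → ((Fin s → ℝ) →L[ℝ] (Fin s → ℝ)) :=
    fun M => LinearMap.toContinuousLinearMap (Matrix.mulVecLin M) with hMVdef
  have hMV : ∀ M v, (MV M) v = M.mulVec v := fun M v => by
    simp [hMVdef, LinearMap.coe_toContinuousLinearMap', Matrix.mulVecLin_apply]
  have hzfun : z = fun t => ∑ j ∈ Finset.range k,
      ((-1 : ℝ) ^ j) • (N ^ j).mulVec (iteratedDeriv j u t) := funext hz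
  have hgsm : ∀ j : ℕ, ContDiff ℝ (⊤:ℕ∞)
      (fun t => ((-1 : ℝ) ^ j) • (N ^ j).mulVec (iteratedDeriv j u t)) := by
    intro j
    have h1 : ContDiff ℝ (⊤:ℕ∞) (fun t => (MV (N^j)) (iteratedDeriv j u t)) :=
      (MV (N^j)).contDiff.comp (myContDiff_iteratedDeriv hu j)
    have h3 : (fun t => ((-1:ℝ)^j) • (N^j).mulVec (iteratedDeriv j u t))
        = fun t => ((-1:ℝ)^j) • ((MV (N^j)) (iteratedDeriv j u t)) := by
      funext t; rw [hMV]
    rw [h3]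
    exact h1.const_smul _
  have hzc : ContDiff ℝ (⊤:ℕ∞) z := by
    rw [hzfun]
    exact ContDiff.sum fun j _ => hgsm j
  -- iterated derivative formula for z
  have hziter : ∀ (i : ℕ) (t : ℝ), iteratedDeriv i z t
      = ∑ j ∈ Finset.range k, ((-1 : ℝ) ^ j) • (N ^ j).mulVec (iteratedDeriv (i+j) u t) := by
    intro i t
    rw [hzfun, myIteratedDeriv_sum (Finset.range k) _ (fun j _ => hgsm j) i t]
    refine Finset.sum_congr rfl fun j _ => ?_
    have e1 : (fun t => ((-1:ℝ)^j) • (N^j).mulVec (iteratedDeriv j u t))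
        = fun t => (((-1:ℝ)^j) • MV (N^j)) (iteratedDeriv j u t) := by
      funext t; rw [ContinuousLinearMap.smul_apply, hMV]
    rw [e1, myIteratedDeriv_clm (((-1:ℝ)^j) • MV (N^j)) (myContDiff_iteratedDeriv hu j) i t,
      myIteratedDeriv_comp i j u, ContinuousLinearMap.smul_apply, hMV]
  -- z satisfies the DAE chain
  have hNz : ∀ (i : ℕ) (t : ℝ), N.mulVec (iteratedDeriv (i+1) z t)
      = -(iteratedDeriv i z t) + iteratedDeriv i u t := by
    intro i t
    obtain ⟨k', rfl⟩ : ∃ k', k = k' + 1 := ⟨k-1, by omega⟩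
    rw [hziter, hziter]
    have hL : N.mulVec (∑ j ∈ Finset.range (k'+1),
          ((-1:ℝ)^j) • (N^j).mulVec (iteratedDeriv (i+1+j) u t))
        = ∑ j ∈ Finset.range (k'+1),
          ((-1:ℝ)^j) • (N^(j+1)).mulVec (iteratedDeriv (i+1+j) u t) := by
      rw [← hMV N, map_sum]
      refine Finset.sum_congr rfl fun j _ => ?_
      rw [map_smul, hMV, Matrix.mulVec_mulVec, ← pow_succ']
    rw [hL, Finset.sum_range_succ, hN, Matrix.zero_mulVec, smul_zero, add_zero,
      Finset.sum_range_succ' (fun j => ((-1:ℝ)^j) • (N^j).mulVec (iteratedDeriv (i+j) u t)) k']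
    simp only [pow_zero, pow_succ, one_smul, Nat.add_zero, Matrix.one_mulVec]
    rw [neg_add, ← Finset.sum_neg_distrib]
    rw [neg_add_cancel_right]
    refine Finset.sum_congr rfl fun j _ => ?_
    rw [show i + (j+1) = i+1+j by omega]
    rw [← neg_smul]
    ring_nf
  -- exactness iteration
  have hexact : ∀ (r i : ℕ), i + r ≤ m → ∀ h : ℝ, 0 < h →
      zhat i h = (∑ j ∈ Finset.range r,
          ((-1:ℝ)^j) • (N^j).mulVec (iteratedDeriv (i+j) u (tn+h)))
        + ((-1:ℝ)^r) • (N^r).mulVec (zhat (i+r) h) := by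
    intro r
    induction r with
    | zero => intro i _ h hh; simp
    | succ r ih =>
      intro i hir h hh
      rw [ih i (by omega) h hh, Finset.sum_range_succ]
      have hc := hchain h hh (i+r) (by omega)
      have hsolve : zhat (i+r) h = iteratedDeriv (i+r) u (tn+h) - N.mulVec (zhat (i+r+1) h) := by
        rw [hc]; abel
      have key : ((-1:ℝ)^r) • (N^r).mulVec (zhat (i+r) h)
          = ((-1:ℝ)^r) • (N^r).mulVec (iteratedDeriv (i+r) u (tn+h))
            + ((-1:ℝ)^(r+1)) • (N^(r+1)).mulVec (zhat (i+(r+1)) h) := by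
        rw [hsolve, ← hMV (N^r), map_sub, hMV, hMV, Matrix.mulVec_mulVec, ← pow_succ,
          smul_sub, show i + (r+1) = i + r + 1 by omega]
        rw [pow_succ (-1:ℝ) r, mul_neg_one, neg_smul, sub_eq_add_neg]
      rw [key, add_assoc]
  -- Part 1: exactness
  have part1 : ∀ i, i ≤ m → k ≤ m - i → ∀ h : ℝ, 0 < h →
      zhat i h = iteratedDeriv i z (tn + h) := by
    intro i him hki h hh
    rw [hexact k i (by omega) h hh, hN, Matrix.zero_mulVec, smul_zero, add_zero,
      hziter i (tn+h)]
  -- error vector at top level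
  set w : ℝ → Fin s → ℝ := fun h => zhat m h - iteratedDeriv m z (tn + h) with hwdef
  have herr0 : ∀ d, d ≤ m → ∀ h : ℝ, 0 < h →
      zhat (m-d) h - iteratedDeriv (m-d) z (tn+h)
        = ((-1:ℝ)^d) • (N^d).mulVec (w h) := by
    intro d
    induction d with
    | zero => intro _ h hh; simp [hwdef]
    | succ d ih =>
      intro hdm h hh
      have hid : m - (d+1) + 1 = m - d := by omega
      have hc := hchain h hh (m-(d+1)) (by omega)
      have hz' := hNz (m-(d+1)) (tn+h)
      rw [hid] at hc hz'
      have step : zhat (m-(d+1)) h - iteratedDeriv (m-(d+1)) z (tn+h)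
          = -(N.mulVec (zhat (m-d) h - iteratedDeriv (m-d) z (tn+h))) := by
        have e1 : zhat (m-(d+1)) h = iteratedDeriv (m-(d+1)) u (tn+h)
            - N.mulVec (zhat (m-d) h) := by rw [hc]; abel
        have e2 : iteratedDeriv (m-(d+1)) z (tn+h) = iteratedDeriv (m-(d+1)) u (tn+h)
            - N.mulVec (iteratedDeriv (m-d) z (tn+h)) := by rw [hz']; abel
        have e3 : N.mulVec (zhat (m-d) h - iteratedDeriv (m-d) z (tn+h))
            = N.mulVec (zhat (m-d) h) - N.mulVec (iteratedDeriv (m-d) z (tn+h)) := by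
          rw [← hMV N, map_sub, hMV, hMV]
        rw [e1, e2, e3]
        abel
      rw [step, ih (by omega) h hh, ← hMV N, map_smul, hMV, Matrix.mulVec_mulVec,
        ← pow_succ', pow_succ (-1:ℝ) d, mul_neg_one, neg_smul]
  have herr : ∀ i, i ≤ m → ∀ h : ℝ, 0 < h →
      zhat i h - iteratedDeriv i z (tn+h)
        = ((-1:ℝ)^(m-i)) • (N^(m-i)).mulVec (w h) := by
    intro i hi h hh
    have := herr0 (m-i) (by omega) h hh
    rwa [show m - (m-i) = i by omega] at this
  -- the defect of the Obreshkov closure on the exact solution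
  set ρ : ℝ → Fin s → ℝ := fun h =>
    (∑ i ∈ Finset.range (m+1),
      ((-1:ℝ)^i * obreshkovAlpha i l m * h^i) • iteratedDeriv i z (tn+h))
    - (∑ i ∈ Finset.range (l+1),
      (obreshkovAlpha i m l * h^i) • iteratedDeriv i z tn) with hρdef
  have hsum : ∀ h : ℝ, 0 < h →
      ∑ i ∈ Finset.range (m+1), ((-1:ℝ)^i * obreshkovAlpha i l m * h^i) •
        (zhat i h - iteratedDeriv i z (tn+h)) = -ρ h := by
    intro h hh
    simp only [smul_sub, Finset.sum_sub_distrib]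
    rw [hclosure h hh, hρdef, neg_sub]
  -- Taylor expansion of the defect: the algebraic cancellation
  have alg : ∀ h : ℝ,
      ∑ i ∈ Finset.range (m+1), ((-1:ℝ)^i * obreshkovAlpha i l m * h^i) •
        (∑ q ∈ Finset.range (l+m-i+1),
          ((h^q / (Nat.factorial q : ℝ)) • iteratedDeriv (q+i) z tn))
      = ∑ i ∈ Finset.range (l+1), (obreshkovAlpha i m l * h^i) • iteratedDeriv i z tn := by
    intro h
    have stepA : ∀ i ∈ Finset.range (m+1),
        ((-1:ℝ)^i * obreshkovAlpha i l m * h^i) •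
          (∑ q ∈ Finset.range (l+m-i+1),
            ((h^q / (Nat.factorial q : ℝ)) • iteratedDeriv (q+i) z tn))
        = ∑ p ∈ Finset.range (l+m+1),
            (if i ≤ p then ((-1:ℝ)^i * obreshkovAlpha i l m * h^i *
              (h^(p-i) / (Nat.factorial (p-i) : ℝ))) else 0) • iteratedDeriv p z tn := by
      intro i hi
      rw [Finset.mem_range] at hi
      rw [Finset.smul_sum]
      simp only [ite_smul, zero_smul]
      rw [← Finset.sum_filter]
      refine Finset.sum_nbij' (fun q => q + i) (fun p => p - i) ?_ ?_ ?_ ?_ ?_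
      · intro q hq
        rw [Finset.mem_range] at hq
        simp only [Finset.mem_filter, Finset.mem_range]
        omega
      · intro p hp
        simp only [Finset.mem_filter, Finset.mem_range] at hp
        simp only [Finset.mem_range]
        omega
      · intro q hq
        omega
      · intro p hp
        simp only [Finset.mem_filter, Finset.mem_range] at hp
        omega
      · intro q hq
        rw [smul_smul, show q + i - i = q by omega]
    rw [Finset.sum_congr rfl stepA, Finset.sum_comm]
    have stepB : ∀ p ∈ Finset.range (l+m+1),
        (∑ i ∈ Finset.range (m+1),
          (if i ≤ p then ((-1:ℝ)^i * obreshkovAlpha i l m * h^i *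
            (h^(p-i) / (Nat.factorial (p-i) : ℝ))) else 0) • iteratedDeriv p z tn)
        = (obreshkovAlpha p m l * h^p) • iteratedDeriv p z tn := by
      intro p hp
      rw [Finset.mem_range] at hp
      rw [← Finset.sum_smul]
      congr 1
      have e1 : ∀ i ∈ Finset.range (m+1),
          (if i ≤ p then ((-1:ℝ)^i * obreshkovAlpha i l m * h^i *
            (h^(p-i) / (Nat.factorial (p-i) : ℝ))) else 0)
          = h^p * (if i ≤ p then ((-1:ℝ)^i * obreshkovAlpha i l m /
              (Nat.factorial (p-i) : ℝ)) else 0) := by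
        intro i _
        by_cases hip : i ≤ p
        · rw [if_pos hip, if_pos hip]
          have hps : h ^ p = h ^ i * h ^ (p - i) := by
            rw [← pow_add]; congr 1; omega
          rw [hps]; ring
        · rw [if_neg hip, if_neg hip, mul_zero]
      rw [Finset.sum_congr rfl e1, ← Finset.mul_sum,
        coeff_identity l m p (by omega), mul_comm]
    rw [Finset.sum_congr rfl stepB]
    symm
    apply Finset.sum_subset (Finset.range_subset_range.mpr (by omega))
    intro p hp hpl
    rw [Finset.mem_range] at hp
    rw [Finset.mem_range, not_lt] at hpl
    have : Nat.choose l p = 0 := Nat.choose_eq_zero_of_lt (by omega)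
    rw [obreshkovAlpha, this]
    simp
  -- Taylor remainder estimate on the defect
  have hρeq : ∀ h : ℝ, ρ h = ∑ i ∈ Finset.range (m+1),
      ((-1:ℝ)^i * obreshkovAlpha i l m * h^i) •
        (iteratedDeriv i z (tn+h) - ∑ q ∈ Finset.range (l+m-i+1),
          ((h^q / (Nat.factorial q : ℝ)) • iteratedDeriv (q+i) z tn)) := by
    intro h
    rw [hρdef]
    simp only
    rw [← alg h, ← Finset.sum_sub_distrib]
    exact Finset.sum_congr rfl fun i _ => (smul_sub _ _ _).symm
  have hρO : ρ =O[nhdsWithin (0:ℝ) (Set.Ioi 0)] fun h : ℝ => h ^ ((l:ℤ)+m+1) := by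
    have big : (fun h : ℝ => ∑ i ∈ Finset.range (m+1),
        ((-1:ℝ)^i * obreshkovAlpha i l m * h^i) •
          (iteratedDeriv i z (tn+h) - ∑ q ∈ Finset.range (l+m-i+1),
            ((h^q / (Nat.factorial q : ℝ)) • iteratedDeriv (q+i) z tn)))
        =O[nhdsWithin (0:ℝ) (Set.Ioi 0)] fun h : ℝ => h ^ ((l:ℤ)+m+1) := by
      apply Asymptotics.IsBigO.fun_sum
      intro i hi
      rw [Finset.mem_range] at hi
      have htay := taylor_isBigO (myContDiff_iteratedDeriv hzc i) tn (l+m-i)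
      simp only [myIteratedDeriv_comp] at htay
      have hg : (fun h : ℝ => h^(l+m-i+1)) = fun h : ℝ => h ^ (((l+m-i+1 : ℕ)) : ℤ) := by
        funext h; rw [zpow_natCast]
      rw [hg] at htay
      have h2 := my_smul_pow_isBigO i htay
      have hexp : (i:ℤ) + ((l+m-i+1:ℕ):ℤ) = (l:ℤ)+m+1 := by omega
      rw [hexp] at h2
      have h3 := h2.const_smul_left ((-1:ℝ)^i * obreshkovAlpha i l m)
      refine h3.congr_left fun h => ?_
      simp only [Pi.smul_apply]
      rw [smul_smul, mul_assoc]
    exact big.congr_left fun h => (hρeq h).symm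
  -- the closure applied to the error, hit with powers of N
  have hkey : ∀ (j : ℕ) (h : ℝ), 0 < h →
      ∑ i ∈ Finset.range (m+1), ((-1:ℝ)^m * obreshkovAlpha i l m * h^i) •
        (N^(m-i+j)).mulVec (w h) = -(N^j).mulVec (ρ h) := by
    intro j h hh
    have h2 : ∑ i ∈ Finset.range (m+1), ((-1:ℝ)^i * obreshkovAlpha i l m * h^i) •
        (((-1:ℝ)^(m-i)) • (N^(m-i)).mulVec (w h)) = -ρ h := by
      rw [← hsum h hh]
      refine Finset.sum_congr rfl fun i hi => ?_
      rw [Finset.mem_range] at hi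
      rw [herr i (by omega) h hh]
    have h3 : ∑ i ∈ Finset.range (m+1), (MV (N^j))
        (((-1:ℝ)^i * obreshkovAlpha i l m * h^i) •
          (((-1:ℝ)^(m-i)) • (N^(m-i)).mulVec (w h))) = (MV (N^j)) (-ρ h) := by
      rw [← map_sum, h2]
    rw [map_neg, hMV] at h3
    rw [← h3]
    refine Finset.sum_congr rfl fun i hi => ?_
    rw [Finset.mem_range] at hi
    rw [map_smul, map_smul, hMV, Matrix.mulVec_mulVec, ← pow_add,
      show j + (m-i) = m-i+j by omega, smul_smul]
    congr 1
    symm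
    have hsign : (-1:ℝ)^i * (-1:ℝ)^(m-i) = (-1:ℝ)^m := by
      rw [← pow_add]; congr 1; omega
    calc ((-1:ℝ)^i * obreshkovAlpha i l m * h^i) * (-1:ℝ)^(m-i)
        = ((-1:ℝ)^i * (-1:ℝ)^(m-i)) * (obreshkovAlpha i l m * h^i) := by ring
      _ = (-1:ℝ)^m * (obreshkovAlpha i l m * h^i) := by rw [hsign]
      _ = (-1:ℝ)^m * obreshkovAlpha i l m * h^i := by ring
  -- positivity of the leading coefficient
  have hα : obreshkovAlpha m l m ≠ 0 := by
    rw [obreshkovAlpha, Nat.choose_self]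
    have h1 : 0 < (Nat.factorial (m+l-m) : ℝ) := by exact_mod_cast Nat.factorial_pos _
    have h2 : 0 < (Nat.factorial (m+l) : ℝ) := by exact_mod_cast Nat.factorial_pos _
    positivity
  set C0 : ℝ := (-1:ℝ)^m * obreshkovAlpha m l m with hC0
  have hC0ne : C0 ≠ 0 := mul_ne_zero (pow_ne_zero _ (by norm_num)) hα
  -- the downward induction on powers of N
  have hwO : ∀ (d j : ℕ), k ≤ j + d →
      (fun h : ℝ => (N^j).mulVec (w h)) =O[nhdsWithin (0:ℝ) (Set.Ioi 0)]
        fun h : ℝ => h ^ ((l:ℤ) + 2 - k + j) := by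
    intro d
    induction d with
    | zero =>
      intro j hj
      have hz0 : N ^ j = 0 := by
        rw [show j = k + (j - k) by omega, pow_add, hN, zero_mul]
      simp only [hz0, Matrix.zero_mulVec]
      exact isBigO_zero _ _
    | succ d ih =>
      intro j hj
      by_cases hjd : k ≤ j + d
      · exact ih j hjd
      · have hjk : j + d + 1 = k := by omega
        have hmain : (fun h : ℝ => (C0 * h^m) • (N^j).mulVec (w h))
            =O[nhdsWithin (0:ℝ) (Set.Ioi 0)] fun h : ℝ => h ^ ((l:ℤ)+m+2-k+j) := by
          have hrhs : (fun h : ℝ => -(N^j).mulVec (ρ h) - ∑ i ∈ Finset.range m,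
              ((-1:ℝ)^m * obreshkovAlpha i l m * h^i) • (N^(m-i+j)).mulVec (w h))
              =O[nhdsWithin (0:ℝ) (Set.Ioi 0)] fun h : ℝ => h ^ ((l:ℤ)+m+2-k+j) := by
            apply Asymptotics.IsBigO.sub
            · have b1 : (fun h : ℝ => (N^j).mulVec (ρ h))
                  =O[nhdsWithin (0:ℝ) (Set.Ioi 0)] ρ := by
                have := (MV (N^j)).isBigO_comp ρ (nhdsWithin (0:ℝ) (Set.Ioi 0))
                refine this.congr_left fun h => ?_
                rw [hMV]
              exact ((b1.trans hρO).trans (my_zpow_isBigO (by omega))).neg_left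
            · apply Asymptotics.IsBigO.fun_sum
              intro i hi
              rw [Finset.mem_range] at hi
              by_cases hz2 : k ≤ m - i + j
              · have hz3 : N ^ (m-i+j) = 0 := by
                  rw [show m-i+j = k + (m-i+j-k) by omega, pow_add, hN, zero_mul]
                simp only [hz3, Matrix.zero_mulVec, smul_zero]
                exact isBigO_zero _ _
              · have hB := ih (m-i+j) (by omega)
                have h2 := my_smul_pow_isBigO i hB
                have hexp : (i:ℤ) + ((l:ℤ) + 2 - k + ((m-i+j:ℕ):ℤ)) = (l:ℤ)+m+2-k+j := by
                  omega
                rw [hexp] at h2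
                have h3 := h2.const_smul_left ((-1:ℝ)^m * obreshkovAlpha i l m)
                refine h3.congr_left fun h => ?_
                simp only [Pi.smul_apply]
                rw [smul_smul, mul_assoc]
          refine hrhs.congr' ?_ Filter.EventuallyEq.rfl
          filter_upwards [self_mem_nhdsWithin] with h hh
          have := hkey j h hh
          rw [Finset.sum_range_succ, show m - m + j = j by omega] at this
          have h4 := eq_sub_of_add_eq' this
          rw [← h4, hC0, mul_assoc]
        have hs1 : (fun h : ℝ => (h^m) • (N^j).mulVec (w h))
            =O[nhdsWithin (0:ℝ) (Set.Ioi 0)] fun h : ℝ => h ^ ((l:ℤ)+m+2-k+j) := by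
          have h5 := hmain.const_smul_left C0⁻¹
          refine h5.congr_left fun h => ?_
          simp only [Pi.smul_apply]
          rw [smul_smul, ← mul_assoc, inv_mul_cancel₀ hC0ne, one_mul]
        have h6 := my_unsmul_pow_isBigO m hs1
        have hexp2 : ((l:ℤ)+m+2-k+j) - (m:ℤ) = (l:ℤ)+2-k+j := by ring
        rwa [hexp2] at h6
  -- conclusion
  intro i hi
  refine ⟨part1 i hi, ?_⟩
  intro hmik
  have hB := hwO k (m-i) (by omega)
  have h2 := my_smul_pow_isBigO i hB
  have hexp : (i:ℤ) + ((l:ℤ)+2-k+((m-i:ℕ):ℤ)) = (l:ℤ)+(m:ℤ)+2-(k:ℤ) := by omega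
  rw [hexp] at h2
  have h3 := h2.const_smul_left ((-1:ℝ)^(m-i))
  refine h3.congr' ?_ Filter.EventuallyEq.rfl
  filter_upwards [self_mem_nhdsWithin] with h hh
  simp only [Pi.smul_apply]
  rw [herr i hi h hh, smul_comm]
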